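/- For all real a > 1/3, Γ(a, a - 1/3)/Γ(a) > 1/2, i.e., P(X_a > a - 1/3) > 1/2 where X_a has the gamma distribution with shape a and scale 1. -/

import Mathlib

open Real MeasureTheory Set Filter

noncomputable def uIG (a x : ℝ) : ℝ := ∫ t in Set.Ioi x, t ^ (a - 1) * Real.exp (-t)

lemma logIneq {u : ℝ} (h0 : 0 ≤ u) (h1 : u < 1) :
    2*u + 2/3*u^3 ≤ Real.log ((1+u)/(1-u)) := by
  rcases eq_or_lt_of_le h0 with rfl | h0'
  · simp
  set F : ℝ → ℝ := fun x => Real.log (1+x) - Real.log (1-x) - 2*x - 2/3*x^3 with hF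
  have key : ∀ x ∈ Icc (0:ℝ) u, HasDerivAt F (1/(1+x) + 1/(1-x) - 2 - 2*x^2) x := by
    intro x hx
    have hx1 : (0:ℝ) < 1 + x := by nlinarith [hx.1]
    have hx2 : (0:ℝ) < 1 - x := by nlinarith [hx.2]
    have d1 : HasDerivAt (fun x : ℝ => Real.log (1+x)) (1/(1+x)) x := by
      have := ((hasDerivAt_id x).const_add 1).log hx1.ne'
      simpa using this
    have d2 : HasDerivAt (fun x : ℝ => Real.log (1-x)) (-1/(1-x)) x := by
      have := ((hasDerivAt_id x).const_sub 1).log hx2.ne'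
      simpa using this
    have d3 : HasDerivAt (fun x : ℝ => 2*x) 2 x := by
      simpa using (hasDerivAt_id x).const_mul 2
    have d4 : HasDerivAt (fun x : ℝ => 2/3*x^3) (2/3*(3*x^2)) x := by
      simpa using (hasDerivAt_pow 3 x).const_mul (2/3)
    have := ((d1.sub d2).sub d3).sub d4
    refine this.congr_deriv ?_
    ring
  have mono : MonotoneOn F (Icc 0 u) := by
    apply monotoneOn_of_deriv_nonneg (convex_Icc 0 u)
    · exact fun x hx => (key x hx).continuousAt.continuousWithinAt
    · intro x hx
      rw [interior_Icc] at hx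
      exact (key x (Ioo_subset_Icc_self hx)).differentiableAt.differentiableWithinAt
    · intro x hx
      rw [interior_Icc] at hx
      rw [(key x (Ioo_subset_Icc_self hx)).deriv]
      have hx1 : (0:ℝ) < 1 + x := by nlinarith [hx.1]
      have hx2 : (0:ℝ) < 1 - x := by nlinarith [hx.2, h1]
      have key2 : 1/(1+x) + 1/(1-x) - 2 - 2*x^2 = 2*x^4/((1+x)*(1-x)) := by
        field_simp
        ring
      rw [key2]
      positivity
  have h := mono (left_mem_Icc.2 h0) (right_mem_Icc.2 h0) h0
  have hF0 : F 0 = 0 := by simp [hF]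
  have hFu : F u ≥ 0 := by rw [← hF0]; exact h
  have hu1 : (0:ℝ) < 1 - u := by linarith
  have hu2 : (0:ℝ) < 1 + u := by linarith
  rw [Real.log_div hu2.ne' hu1.ne']
  simp only [hF] at hFu
  linarith

lemma core {a m x : ℝ} (ha : 1/3 < a) (hm : 0 < m) (hmm : 3*a*m^3 = 3*a - 1)
    (hx0 : 0 ≤ x) (hxm : x < m) :
    (m-x) ^ (3*a-1) * Real.exp (-(a*(m-x)^3)) ≤ (m+x) ^ (3*a-1) * Real.exp (-(a*(m+x)^3)) := by
  have ha0 : (0:ℝ) < a := by linarith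
  have h3a : (0:ℝ) < 3*a - 1 := by linarith
  have hmx1 : (0:ℝ) < m - x := by linarith
  have hmx2 : (0:ℝ) < m + x := by linarith
  rw [Real.rpow_def_of_pos hmx1, Real.rpow_def_of_pos hmx2, ← Real.exp_add, ← Real.exp_add,
    Real.exp_le_exp]
  have hu0 : 0 ≤ x/m := div_nonneg hx0 hm.le
  have hu1 : x/m < 1 := (div_lt_one hm).2 hxm
  have hlog := logIneq hu0 hu1
  have hratio : (1 + x/m)/(1 - x/m) = (m+x)/(m-x) := by
    rw [div_eq_div_iff (by linarith : (1:ℝ) - x/m ≠ 0) hmx1.ne']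
    field_simp
  rw [hratio, Real.log_div hmx2.ne' hmx1.ne'] at hlog
  have halg : (3*a-1) * (2*(x/m) + 2/3*(x/m)^3) = a*((m+x)^3 - (m-x)^3) := by
    rw [← hmm]
    field_simp
    ring
  nlinarith [mul_le_mul_of_nonneg_left hlog h3a.le]

lemma cuberoot_cube {x : ℝ} (hx : 0 ≤ x) : (x^3 : ℝ) ^ ((1:ℝ)/3) = x := by
  rw [← Real.rpow_natCast x 3, ← Real.rpow_mul hx]
  norm_num

lemma cube_image {a p q : ℝ} (ha : 0 < a) (hp : 0 ≤ p) :
    (fun y : ℝ => a * y^3) '' Ioo p q = Ioo (a*p^3) (a*q^3) := by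
  ext t
  constructor
  · rintro ⟨y, ⟨h1, h2⟩, rfl⟩
    have hy0 : 0 ≤ y := le_trans hp h1.le
    exact mem_Ioo.2 ⟨mul_lt_mul_of_pos_left (pow_lt_pow_left₀ h1 hp three_ne_zero) ha,
      mul_lt_mul_of_pos_left (pow_lt_pow_left₀ h2 hy0 three_ne_zero) ha⟩
  · rintro ⟨h1, h2⟩
    have h3 : p^3 < q^3 := lt_of_mul_lt_mul_left (h1.trans h2) ha.le
    have hq0 : 0 ≤ q := by
      by_contra hq
      push_neg at hq
      have : q^3 < 0 := Odd.pow_neg ⟨1, by norm_num⟩ hq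
      nlinarith [pow_nonneg hp 3]
    have ht0 : 0 ≤ t/a := by
      have h4 : 0 ≤ a * p^3 := by positivity
      have h5 : 0 < t := lt_of_le_of_lt h4 h1
      positivity
    refine ⟨(t/a) ^ ((1:ℝ)/3), ⟨?_, ?_⟩, ?_⟩
    · have hpt : p^3 < t/a := by rw [lt_div_iff₀ ha]; linarith
      calc p = (p^3) ^ ((1:ℝ)/3) := (cuberoot_cube hp).symm
        _ < (t/a) ^ ((1:ℝ)/3) := Real.rpow_lt_rpow (by positivity) hpt (by norm_num)
    · have hqt : t/a < q^3 := by rw [div_lt_iff₀ ha]; linarith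
      calc (t/a) ^ ((1:ℝ)/3) < (q^3) ^ ((1:ℝ)/3) :=
            Real.rpow_lt_rpow ht0 hqt (by norm_num)
        _ = q := cuberoot_cube hq0
    · have : ((t/a) ^ ((1:ℝ)/3))^(3:ℕ) = t/a := by
        rw [← Real.rpow_natCast ((t/a) ^ ((1:ℝ)/3)) 3, ← Real.rpow_mul ht0]
        norm_num
      show a * ((t/a) ^ ((1:ℝ)/3))^(3:ℕ) = t
      rw [this]
      field_simp

lemma cube_inj {a p q : ℝ} (ha : 0 < a) (hp : 0 ≤ p) :
    InjOn (fun y : ℝ => a * y^3) (Ioo p q) := by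
  intro y1 h1 y2 h2 h
  have h1' : 0 ≤ y1 := le_trans hp h1.1.le
  have h2' : 0 ≤ y2 := le_trans hp h2.1.le
  simp only at h
  rcases lt_trichotomy y1 y2 with hlt | heq | hgt
  · have := pow_lt_pow_left₀ hlt h1' (three_ne_zero)
    nlinarith
  · exact heq
  · have := pow_lt_pow_left₀ hgt h2' (three_ne_zero)
    nlinarith

theorem stmt4 (a : ℝ) (ha : 1/3 < a) : 1/2 < uIG a (a - 1/3) / Real.Gamma a := by
  have ha0 : (0:ℝ) < a := by linarith
  set c : ℝ := a - 1/3 with hc_def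
  have hc : 0 < c := by rw [hc_def]; linarith
  set g : ℝ → ℝ := fun t => t ^ (a-1) * Real.exp (-t) with hg_def
  set m : ℝ := (c/a) ^ ((1:ℝ)/3) with hm_def
  have hca : 0 < c/a := by positivity
  have hm : 0 < m := Real.rpow_pos_of_pos hca _
  have hm3 : a * m^3 = c := by
    have h1 : m^(3:ℕ) = c/a := by
      rw [hm_def, ← Real.rpow_natCast ((c/a) ^ ((1:ℝ)/3)) 3, ← Real.rpow_mul hca.le]
      norm_num
    rw [h1]
    field_simp
  -- integrability of g
  have hg_int : IntegrableOn g (Ioi 0) := by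
    have h := Real.GammaIntegral_convergent ha0
    exact h.congr_fun (fun t _ => mul_comm _ _) measurableSet_Ioi
  -- positivity of g on positive reals
  have hg_pos : ∀ t : ℝ, 0 < t → 0 < g t := fun t ht => by
    simp only [hg_def]
    positivity
  -- the substitution map and its data
  have hderiv : ∀ (s : Set ℝ), ∀ y ∈ s, HasDerivWithinAt (fun y : ℝ => a * y^3) (3*a*y^2) s y := by
    intro s y _
    have : HasDerivAt (fun y : ℝ => a * y^3) (a * (3*y^2)) y := by
      simpa using (hasDerivAt_pow 3 y).const_mul a
    exact (this.congr_deriv (by ring)).hasDerivWithinAt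
  -- Φ : transformed integrand
  set Φ : ℝ → ℝ := fun y => |3*a*y^2| * g (a*y^3) with hΦ_def
  -- image identities
  have himg1 : (fun y : ℝ => a * y^3) '' Ioo 0 m = Ioo 0 c := by
    rw [cube_image ha0 le_rfl]
    norm_num [hm3]
  have himg2 : (fun y : ℝ => a * y^3) '' Ioo m (2*m) = Ioo c (8*c) := by
    rw [cube_image ha0 hm.le, hm3, show a*(2*m)^3 = 8*c from by linear_combination 8 * hm3]
  -- substitution 1 : J
  have hsub1 : ∫ t in Ioo 0 c, g t = ∫ y in Ioo 0 m, Φ y := by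
    have := integral_image_eq_integral_abs_deriv_smul measurableSet_Ioo
      (hderiv (Ioo 0 m)) (cube_inj ha0 le_rfl) g
    rw [himg1] at this
    simpa [hΦ_def, smul_eq_mul] using this
  -- substitution 2 : K
  have hsub2 : ∫ t in Ioo c (8*c), g t = ∫ y in Ioo m (2*m), Φ y := by
    have := integral_image_eq_integral_abs_deriv_smul measurableSet_Ioo
      (hderiv (Ioo m (2*m))) (cube_inj ha0 hm.le) g
    rw [himg2] at this
    simpa [hΦ_def, smul_eq_mul] using this
  -- reflection
  have hd : ∀ y ∈ Ioo (0:ℝ) m, HasDerivWithinAt (fun y : ℝ => 2*m - y) (-1) (Ioo 0 m) y := by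
    intro y _
    exact ((hasDerivAt_id y).const_sub (2*m)).hasDerivWithinAt
  have hinj : InjOn (fun y : ℝ => 2*m - y) (Ioo 0 m) := fun y1 _ y2 _ h => by
    simp only [] at h
    linarith
  have hrefl : ∫ y in Ioo m (2*m), Φ y = ∫ y in Ioo 0 m, Φ (2*m - y) := by
    have := integral_image_eq_integral_abs_deriv_smul measurableSet_Ioo hd hinj Φ
    rw [Set.image_const_sub_Ioo, show (2*m - m) = m by ring, sub_zero] at this
    simpa only [abs_neg, abs_one, one_smul, one_mul, smul_eq_mul] using this
  -- bridge : explicit form of Φ at positive points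
  have h3am : 3*a*m^3 = 3*a - 1 := by rw [hc_def] at hm3; linarith
  have bridge : ∀ y : ℝ, 0 < y → Φ y = 3 * a^a * (y^(3*a-1) * Real.exp (-(a*y^3))) := by
    intro y hy
    have habs : |3*a*y^2| = 3*a*y^2 := abs_of_nonneg (by positivity)
    simp only [hΦ_def, hg_def, habs]
    rw [Real.mul_rpow ha0.le (by positivity : (0:ℝ) ≤ y^3)]
    rw [← Real.rpow_natCast y 3, ← Real.rpow_mul hy.le]
    have e1 : a * a^(a-1) = a^a := by
      nth_rewrite 1 [← Real.rpow_one a]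
      rw [← Real.rpow_add ha0]
      norm_num
    have e2 : y^(2:ℕ) * y^((3:ℕ)*(a-1) : ℝ) = y^(3*a-1) := by
      rw [← Real.rpow_natCast y 2, ← Real.rpow_add hy]
      congr 1
      push_cast
      ring
    calc 3*a*y^2 * (a^(a-1) * y^(((3:ℕ):ℝ)*(a-1)) * Real.exp (-(a * y^((3:ℕ):ℝ))))
        = 3 * (a * a^(a-1)) * (y^(2:ℕ) * y^(((3:ℕ):ℝ)*(a-1))) * Real.exp (-(a * y^((3:ℕ):ℝ))) := by
          ring
      _ = 3 * a^a * (y^(3*a-1) * Real.exp (-(a * y^((3:ℕ):ℝ)))) := by rw [e1, e2]; ring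
  -- pointwise inequality
  have hpt : ∀ y ∈ Ioo (0:ℝ) m, Φ y ≤ Φ (2*m - y) := by
    rintro y ⟨hy0, hym⟩
    have hz : 0 < 2*m - y := by linarith
    rw [bridge y hy0, bridge (2*m - y) hz]
    have hcore := core ha hm h3am (x := m - y) (by linarith) (by linarith)
    rw [show m - (m-y) = y by ring, show m + (m-y) = 2*m - y by ring] at hcore
    exact mul_le_mul_of_nonneg_left hcore (by positivity)
  -- integrability transfers
  have hsubset1 : Ioo (0:ℝ) c ⊆ Ioi 0 := fun t ht => ht.1
  have hsubset2 : Ioo c (8*c) ⊆ Ioi 0 := fun t ht => lt_trans hc ht.1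
  have hint1 : IntegrableOn Φ (Ioo 0 m) := by
    have h := integrableOn_image_iff_integrableOn_abs_deriv_smul measurableSet_Ioo
      (hderiv (Ioo 0 m)) (cube_inj ha0 le_rfl) g
    rw [himg1] at h
    have h2 := h.1 (hg_int.mono_set hsubset1)
    rw [hΦ_def]
    simpa only [smul_eq_mul] using h2
  have hint_mid : IntegrableOn Φ (Ioo m (2*m)) := by
    have h := integrableOn_image_iff_integrableOn_abs_deriv_smul measurableSet_Ioo
      (hderiv (Ioo m (2*m))) (cube_inj ha0 hm.le) g
    rw [himg2] at h
    have h2 := h.1 (hg_int.mono_set hsubset2)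
    rw [hΦ_def]
    simpa only [smul_eq_mul] using h2
  have hint2 : IntegrableOn (fun y => Φ (2*m - y)) (Ioo 0 m) := by
    have h := integrableOn_image_iff_integrableOn_abs_deriv_smul measurableSet_Ioo hd hinj Φ
    rw [Set.image_const_sub_Ioo, show (2*m - m) = m by ring, sub_zero] at h
    have h2 := h.1 hint_mid
    simpa only [abs_neg, abs_one, one_smul] using h2
  -- J ≤ K
  have hJK : ∫ t in Ioo 0 c, g t ≤ ∫ t in Ioo c (8*c), g t := by
    rw [hsub1, hsub2, hrefl]
    exact setIntegral_mono_on hint1 hint2 measurableSet_Ioo hpt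
  -- tail positivity
  have hc8 : c < 8*c := by linarith
  have hint_tail : IntegrableOn g (Ici (8*c)) :=
    hg_int.mono_set (fun t ht => lt_of_lt_of_le (by linarith : (0:ℝ) < 8*c) ht)
  have htail : 0 < ∫ t in Ici (8*c), g t := by
    have hnn : 0 ≤ᵐ[volume.restrict (Ici (8*c))] g :=
      (ae_restrict_iff' measurableSet_Ici).2 (Filter.Eventually.of_forall fun t ht =>
        (hg_pos t (lt_of_lt_of_le (by linarith : (0:ℝ) < 8*c) ht)).le)
    rw [setIntegral_pos_iff_support_of_nonneg_ae hnn hint_tail]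
    have hsup : Function.support g ∩ Ici (8*c) = Ici (8*c) :=
      inter_eq_right.2 (fun t ht =>
        (hg_pos t (lt_of_lt_of_le (by linarith : (0:ℝ) < 8*c) ht)).ne')
    rw [hsup, Real.volume_Ici]
    simp
  -- split I
  have hmid_int : IntegrableOn g (Ioo c (8*c)) := hg_int.mono_set hsubset2
  have hIsplit : ∫ t in Ioi c, g t = (∫ t in Ioo c (8*c), g t) + ∫ t in Ici (8*c), g t := by
    rw [← Set.Ioo_union_Ici_eq_Ioi hc8]
    exact setIntegral_union
      (Set.disjoint_left.2 fun t ht ht' => absurd ht.2 (not_lt.2 ht'))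
      measurableSet_Ici hmid_int hint_tail
  -- Gamma split
  have hGamma : Real.Gamma a = (∫ t in Ioo 0 c, g t) + ∫ t in Ioi c, g t := by
    have e : ∫ x in Ioi (0:ℝ), Real.exp (-x) * x ^ (a-1) = ∫ x in Ioi (0:ℝ), g x :=
      setIntegral_congr_fun measurableSet_Ioi (fun x _ => mul_comm _ _)
    have hdisj : Disjoint (Ioo (0:ℝ) c) (Ici c) :=
      Set.disjoint_left.2 fun t ht ht' => absurd ht.2 (not_lt.2 ht')
    rw [Real.Gamma_eq_integral ha0, e, ← Set.Ioo_union_Ici_eq_Ioi hc,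
      setIntegral_union hdisj measurableSet_Ici (hg_int.mono_set hsubset1)
        (hg_int.mono_set (fun t ht => lt_of_lt_of_le hc ht)),
      integral_Ici_eq_integral_Ioi]
  -- conclusion
  have hu : uIG a c = ∫ t in Ioi c, g t := by rw [hg_def]; rfl
  rw [hu, lt_div_iff₀ (Real.Gamma_pos_of_pos ha0)]
  linarith [hJK, htail, hIsplit, hGamma]
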